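/- Let r ∈ ℝ. Every element of the subgroup Γ of GL₃(ℂ) generated by h_X and h_Y is a block lower-triangular matrix of the form [[1, 0], [μ, Q]] (top-left entry 1, vanishing remainder of the first row), where the 2×2 block Q belongs to the eight-element set {±𝟏, ±𝐢, ±𝐣, ±𝐤} and the column μ ∈ ℂ² equals (a₀·𝟏 + a₁·𝐢 + a₂·𝐣 + a₃·𝐤)·v for some integers a₀, a₁, a₂, a₃ whose sum a₀ + a₁ + a₂ + a₃ is even. -/

import Mathlib

open Matrix Complex

/-- The holonomy matrix `h_X`. -/
noncomputable def hX (r : ℝ) : Matrix (Fin 3) (Fin 3) ℂ :=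
  !![1, 0, 0; (r : ℂ), 0, 1; (r : ℂ), -1, 0]

/-- The holonomy matrix `h_Y`. -/
noncomputable def hY (r : ℝ) : Matrix (Fin 3) (Fin 3) ℂ :=
  !![1, 0, 0; -Complex.I * (r : ℂ), 0, -Complex.I; (r : ℂ), -Complex.I, 0]

/-- The quaternionic `2×2` matrices `𝟏, 𝐢, 𝐣, 𝐤`. -/
noncomputable def q1 : Matrix (Fin 2) (Fin 2) ℂ := !![1, 0; 0, 1]
noncomputable def qi : Matrix (Fin 2) (Fin 2) ℂ := !![0, 1; -1, 0]
noncomputable def qj : Matrix (Fin 2) (Fin 2) ℂ := !![0, -Complex.I; -Complex.I, 0]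
noncomputable def qk : Matrix (Fin 2) (Fin 2) ℂ := !![-Complex.I, 0; 0, Complex.I]

/-- The vector `v = (0, r) ∈ ℂ²`. -/
noncomputable def vvec (r : ℝ) : Fin 2 → ℂ := ![0, (r : ℂ)]

/-- The subgroup `Γ` of `GL₃(ℂ)` generated by `h_X` and `h_Y`. -/
noncomputable def Γgp (r : ℝ) : Subgroup (GL (Fin 3) ℂ) :=
  Subgroup.closure
    {g : GL (Fin 3) ℂ |
      (g : Matrix (Fin 3) (Fin 3) ℂ) = hX r ∨ (g : Matrix (Fin 3) (Fin 3) ℂ) = hY r}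

/- ### Auxiliary quaternion machinery -/

noncomputable def uI : Quaternion ℤ := ⟨0,1,0,0⟩
noncomputable def uJ : Quaternion ℤ := ⟨0,0,1,0⟩
noncomputable def uK : Quaternion ℤ := ⟨0,0,0,1⟩

def UQ : Set (Quaternion ℤ) := {1, -1, uI, -uI, uJ, -uJ, uK, -uK}

def sq4 (b : Quaternion ℤ) : ℤ := b.re + b.imI + b.imJ + b.imK

lemma uII : uI * uI = -1 := by
  ext <;> simp [uI, Quaternion.re_mul, Quaternion.imI_mul, Quaternion.imJ_mul, Quaternion.imK_mul] <;> rfl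
lemma uIJ : uI * uJ = uK := by
  ext <;> simp [uI, uJ, uK, Quaternion.re_mul, Quaternion.imI_mul, Quaternion.imJ_mul, Quaternion.imK_mul] <;> rfl
lemma uIK : uI * uK = -uJ := by
  ext <;> simp [uI, uJ, uK, Quaternion.re_mul, Quaternion.imI_mul, Quaternion.imJ_mul, Quaternion.imK_mul] <;> rfl
lemma uJI : uJ * uI = -uK := by
  ext <;> simp [uI, uJ, uK, Quaternion.re_mul, Quaternion.imI_mul, Quaternion.imJ_mul, Quaternion.imK_mul] <;> rfl
lemma uJJ : uJ * uJ = -1 := by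
  ext <;> simp [uJ, Quaternion.re_mul, Quaternion.imI_mul, Quaternion.imJ_mul, Quaternion.imK_mul] <;> rfl
lemma uJK : uJ * uK = uI := by
  ext <;> simp [uI, uJ, uK, Quaternion.re_mul, Quaternion.imI_mul, Quaternion.imJ_mul, Quaternion.imK_mul] <;> rfl
lemma uKI : uK * uI = uJ := by
  ext <;> simp [uI, uJ, uK, Quaternion.re_mul, Quaternion.imI_mul, Quaternion.imJ_mul, Quaternion.imK_mul] <;> rfl
lemma uKJ : uK * uJ = -uI := by
  ext <;> simp [uI, uJ, uK, Quaternion.re_mul, Quaternion.imI_mul, Quaternion.imJ_mul, Quaternion.imK_mul] <;> rfl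
lemma uKK : uK * uK = -1 := by
  ext <;> simp [uK, Quaternion.re_mul, Quaternion.imI_mul, Quaternion.imJ_mul, Quaternion.imK_mul] <;> rfl
lemma starI : star uI = -uI := by ext <;> simp [uI] <;> rfl
lemma starJ : star uJ = -uJ := by ext <;> simp [uJ] <;> rfl
lemma starK : star uK = -uK := by ext <;> simp [uK] <;> rfl

lemma UQ_mul {u u' : Quaternion ℤ} (hu : u ∈ UQ) (hu' : u' ∈ UQ) : u * u' ∈ UQ := by
  rcases hu with rfl|rfl|rfl|rfl|rfl|rfl|rfl|rfl <;>
    rcases hu' with rfl|rfl|rfl|rfl|rfl|rfl|rfl|rfl <;>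
      simp [UQ, uII, uIJ, uIK, uJI, uJJ, uJK, uKI, uKJ, uKK, neg_mul, mul_neg, neg_neg]

lemma UQ_star {u : Quaternion ℤ} (hu : u ∈ UQ) : star u ∈ UQ := by
  rcases hu with rfl|rfl|rfl|rfl|rfl|rfl|rfl|rfl <;>
    simp [UQ, starI, starJ, starK, star_one, star_neg, neg_neg]

lemma UQ_mul_star {u : Quaternion ℤ} (hu : u ∈ UQ) : u * star u = 1 := by
  rcases hu with rfl|rfl|rfl|rfl|rfl|rfl|rfl|rfl <;>
    simp [starI, starJ, starK, uII, uJJ, uKK, neg_mul, mul_neg, neg_neg]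

lemma sq4_mul (a b : Quaternion ℤ) :
    sq4 (a * b) = sq4 a * sq4 b
      - 2 * (a.imI * (b.imI + b.imK) + a.imJ * (b.imI + b.imJ) + a.imK * (b.imJ + b.imK)) := by
  simp only [sq4, Quaternion.re_mul, Quaternion.imI_mul, Quaternion.imJ_mul, Quaternion.imK_mul]
  ring

lemma even_sq4_mul (a : Quaternion ℤ) {b : Quaternion ℤ} (hb : Even (sq4 b)) :
    Even (sq4 (a * b)) := by
  rw [sq4_mul]
  exact (hb.mul_left _).sub (even_two_mul _)

noncomputable def iotaM (r : ℝ) (u b : Quaternion ℤ) : Matrix (Fin 3) (Fin 3) ℂ :=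
  !![1, 0, 0;
     ((b.imI : ℂ) - (b.imJ : ℂ) * Complex.I) * (r : ℂ),
       (u.re : ℂ) - (u.imK : ℂ) * Complex.I, (u.imI : ℂ) - (u.imJ : ℂ) * Complex.I;
     ((b.re : ℂ) + (b.imK : ℂ) * Complex.I) * (r : ℂ),
       -(u.imI : ℂ) - (u.imJ : ℂ) * Complex.I, (u.re : ℂ) + (u.imK : ℂ) * Complex.I]

lemma iotaM_one (r : ℝ) : iotaM r 1 0 = 1 := by
  ext i j
  fin_cases i <;> fin_cases j <;>
    simp [iotaM, Matrix.one_apply, Matrix.vecHead, Matrix.vecTail, Quaternion.re_one,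
      Quaternion.imI_one, Quaternion.imJ_one, Quaternion.imK_one, Quaternion.re_zero,
      Quaternion.imI_zero, Quaternion.imJ_zero, Quaternion.imK_zero]

set_option maxHeartbeats 2000000 in
lemma iotaM_mul (r : ℝ) (u b u' b' : Quaternion ℤ) :
    iotaM r u b * iotaM r u' b' = iotaM r (u * u') (b + u * b') := by
  ext i j
  fin_cases i <;> fin_cases j
  all_goals
    simp [iotaM, Matrix.mul_apply, Fin.sum_univ_three, Quaternion.re_mul, Quaternion.imI_mul,
      Quaternion.imJ_mul, Quaternion.imK_mul]
  all_goals ring_nf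
  all_goals simp only [Complex.I_sq]
  all_goals ring_nf

lemma gen_hX (r : ℝ) : hX r = iotaM r uI ⟨1,1,0,0⟩ := by
  ext i j
  fin_cases i <;> fin_cases j <;>
    simp [hX, iotaM, uI, Matrix.vecHead, Matrix.vecTail]

lemma gen_hY (r : ℝ) : hY r = iotaM r uJ ⟨1,0,1,0⟩ := by
  ext i j
  fin_cases i <;> fin_cases j <;>
    simp [hY, iotaM, uJ, Matrix.vecHead, Matrix.vecTail]

lemma key_lemma (r : ℝ) : ∀ g ∈ Γgp r, ∃ u b : Quaternion ℤ, u ∈ UQ ∧ Even (sq4 b) ∧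
    (g : Matrix (Fin 3) (Fin 3) ℂ) = iotaM r u b := by
  intro g hg
  induction hg using Subgroup.closure_induction with
  | mem x hx =>
    rcases hx with hx | hx
    · exact ⟨uI, ⟨1,1,0,0⟩, by simp [UQ], ⟨1, by simp [sq4]⟩, by rw [hx, gen_hX]⟩
    · exact ⟨uJ, ⟨1,0,1,0⟩, by simp [UQ], ⟨1, by simp [sq4]⟩, by rw [hx, gen_hY]⟩
  | one => exact ⟨1, 0, by simp [UQ], ⟨0, by simp [sq4, Quaternion.re_zero, Quaternion.imI_zero,
      Quaternion.imJ_zero, Quaternion.imK_zero]⟩, by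
      simp [Units.val_one, iotaM_one]⟩
  | mul x y hx hy ihx ihy =>
    obtain ⟨u, b, hu, hb, hxe⟩ := ihx
    obtain ⟨u', b', hu', hb', hye⟩ := ihy
    refine ⟨u * u', b + u * b', UQ_mul hu hu', ?_, ?_⟩
    · have : sq4 (b + u * b') = sq4 b + sq4 (u * b') := by simp [sq4]; ring
      rw [this]
      exact hb.add (even_sq4_mul u hb')
    · rw [Units.val_mul, hxe, hye, iotaM_mul]
  | inv x hx ih =>
    obtain ⟨u, b, hu, hb, hxe⟩ := ih
    refine ⟨star u, -(star u * b), UQ_star hu, ?_, ?_⟩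
    · have : sq4 (-(star u * b)) = -(sq4 (star u * b)) := by simp [sq4]; ring
      rw [this]
      exact (even_sq4_mul (star u) hb).neg
    · have h1 : (x : Matrix (Fin 3) (Fin 3) ℂ) * iotaM r (star u) (-(star u * b)) = 1 := by
        rw [hxe, iotaM_mul, UQ_mul_star hu]
        have hb0 : b + u * -(star u * b) = 0 := by
          rw [mul_neg, ← mul_assoc, UQ_mul_star hu, one_mul, add_neg_cancel]
        rw [hb0, iotaM_one]
      rw [← Matrix.inv_eq_right_inv h1, Matrix.coe_units_inv]

theorem gamma_block_structure (r : ℝ) :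
    ∀ g ∈ Γgp r,
      ∃ Q ∈ ({q1, -q1, qi, -qi, qj, -qj, qk, -qk} :
              Set (Matrix (Fin 2) (Fin 2) ℂ)),
        ∃ a₀ a₁ a₂ a₃ : ℤ, Even (a₀ + a₁ + a₂ + a₃) ∧
          (g : Matrix (Fin 3) (Fin 3) ℂ) 0 0 = 1 ∧
          (g : Matrix (Fin 3) (Fin 3) ℂ) 0 1 = 0 ∧
          (g : Matrix (Fin 3) (Fin 3) ℂ) 0 2 = 0 ∧
          (∀ i j : Fin 2, (g : Matrix (Fin 3) (Fin 3) ℂ) i.succ j.succ = Q i j) ∧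
          (∀ i : Fin 2, (g : Matrix (Fin 3) (Fin 3) ℂ) i.succ 0
            = ((a₀ • q1 + a₁ • qi + a₂ • qj + a₃ • qk) *ᵥ vvec r) i) := by
  intro g hg
  obtain ⟨u, b, hu, hb, hge⟩ := key_lemma r g hg
  have hQ : ∃ Q ∈ ({q1, -q1, qi, -qi, qj, -qj, qk, -qk} :
      Set (Matrix (Fin 2) (Fin 2) ℂ)),
      ∀ i j : Fin 2, iotaM r u b i.succ j.succ = Q i j := by
    rcases hu with rfl|rfl|rfl|rfl|rfl|rfl|rfl|rfl
    · exact ⟨q1, by simp, by intro i j; fin_cases i <;> fin_cases j <;> simp [iotaM, q1, Quaternion.re_one, Quaternion.imI_one,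
        Quaternion.imJ_one, Quaternion.imK_one]⟩
    · exact ⟨-q1, by simp, by intro i j; fin_cases i <;> fin_cases j <;> simp [iotaM, q1, Quaternion.re_one, Quaternion.imI_one,
        Quaternion.imJ_one, Quaternion.imK_one]⟩
    · exact ⟨qi, by simp, by intro i j; fin_cases i <;> fin_cases j <;> simp [iotaM, qi, uI]⟩
    · exact ⟨-qi, by simp, by intro i j; fin_cases i <;> fin_cases j <;>
        simp only [iotaM, Quaternion.re_neg, Quaternion.imI_neg, Quaternion.imJ_neg, Quaternion.imK_neg] <;>
        simp [iotaM, qi, uI]⟩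
    · exact ⟨qj, by simp, by intro i j; fin_cases i <;> fin_cases j <;> simp [iotaM, qj, uJ]⟩
    · exact ⟨-qj, by simp, by intro i j; fin_cases i <;> fin_cases j <;>
        simp only [iotaM, Quaternion.re_neg, Quaternion.imI_neg, Quaternion.imJ_neg, Quaternion.imK_neg] <;>
        simp [iotaM, qj, uJ]⟩
    · exact ⟨qk, by simp, by intro i j; fin_cases i <;> fin_cases j <;> simp [iotaM, qk, uK]⟩
    · exact ⟨-qk, by simp, by intro i j; fin_cases i <;> fin_cases j <;>
        simp only [iotaM, Quaternion.re_neg, Quaternion.imI_neg, Quaternion.imJ_neg, Quaternion.imK_neg] <;>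
        simp [iotaM, qk, uK]⟩
  obtain ⟨Q, hQm, hQe⟩ := hQ
  refine ⟨Q, hQm, b.re, b.imI, b.imJ, b.imK, hb, ?_, ?_, ?_, ?_, ?_⟩
  · rw [hge]; simp [iotaM]
  · rw [hge]; simp [iotaM]
  · rw [hge]; simp [iotaM]
  · intro i j; rw [hge]; exact hQe i j
  · intro i
    rw [hge]
    fin_cases i <;>
      simp [iotaM, q1, qi, qj, qk, vvec, Matrix.mulVec, Fin.sum_univ_two,
        Matrix.smul_apply, dotProduct] <;>
      tauto
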